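/- For any nontrivial ring R and any integer n ≥ 2, the full matrix ring M_n(R) of n × n matrices over R is not a CSNC ring. -/

import Mathlib

/-- An element `a` of a ring is *clean* if `a = e + u` for some idempotent `e` and unit `u`. -/
def IsCleanElem {R : Type*} [Ring R] (a : R) : Prop :=
  ∃ e u : R, IsIdempotentElem e ∧ IsUnit u ∧ a = e + u

/-- An element `a` of a ring is *strongly nil-clean* if `a = e + q` for some idempotent `e`
and nilpotent `q` with `e * q = q * e`. -/
def IsStronglyNilCleanElem {R : Type*} [Ring R] (a : R) : Prop :=
  ∃ e q : R, IsIdempotentElem e ∧ IsNilpotent q ∧ e * q = q * e ∧ a = e + q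

/-- A ring is a *CSNC ring* if every clean element is strongly nil-clean. -/
def IsCSNCRing (R : Type*) [Ring R] : Prop :=
  ∀ a : R, IsCleanElem a → IsStronglyNilCleanElem a

theorem stmt_6 (R : Type*) [Ring R] [Nontrivial R] (n : ℕ) (hn : 2 ≤ n) :
    ¬ IsCSNCRing (Matrix (Fin n) (Fin n) R) := by
  intro h
  set i0 : Fin n := ⟨0, by omega⟩
  set i1 : Fin n := ⟨1, by omega⟩
  have h01 : i0 ≠ i1 := by simp [i0, i1, Fin.ext_iff]
  have h10 : i1 ≠ i0 := h01.symm
  set E00 : Matrix (Fin n) (Fin n) R := Matrix.single i0 i0 1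
  set E01 : Matrix (Fin n) (Fin n) R := Matrix.single i0 i1 1
  set E10 : Matrix (Fin n) (Fin n) R := Matrix.single i1 i0 1
  set E11 : Matrix (Fin n) (Fin n) R := Matrix.single i1 i1 1
  set a : Matrix (Fin n) (Fin n) R := 1 + E01 + E10 - E00 with ha
  set b : Matrix (Fin n) (Fin n) R := 1 - E00 - E00 - E11 + E01 + E10 with hb
  have hab : a * b = 1 := by
    simp only [ha, hb, E00, E01, E10, E11, mul_add, add_mul, sub_mul, mul_sub,
      mul_one, one_mul, Matrix.single_mul_single_same,
      Matrix.single_mul_single_of_ne, h01, h10, ne_eq, not_false_eq_true]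
    abel
  have hba : b * a = 1 := by
    simp only [ha, hb, E00, E01, E10, E11, mul_add, add_mul, sub_mul, mul_sub,
      mul_one, one_mul, Matrix.single_mul_single_same,
      Matrix.single_mul_single_of_ne, h01, h10, ne_eq, not_false_eq_true]
    abel
  have haa : a * a - a = E00 + E11 := by
    simp only [ha, E00, E01, E10, E11, mul_add, add_mul, sub_mul, mul_sub,
      mul_one, one_mul, Matrix.single_mul_single_same,
      Matrix.single_mul_single_of_ne, h01, h10, ne_eq, not_false_eq_true]
    abel
  have hclean : IsCleanElem a :=
    ⟨0, a, by simp [IsIdempotentElem], ⟨⟨a, b, hab, hba⟩, rfl⟩, (zero_add a).symm⟩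
  obtain ⟨e, q, he, hq, hcomm, heq⟩ := h a hclean
  have hce : Commute e q := hcomm
  -- a*a - a is nilpotent
  have hnil : IsNilpotent (a * a - a) := by
    have h1 : a * a - a = e * q + e * q + q * q - q := by
      rw [heq]
      simp only [mul_add, add_mul, he.eq, ← hcomm]
      abel
    rw [h1]
    have n1 : IsNilpotent (e * q) := hce.isNilpotent_mul_left hq
    have n2 : IsNilpotent (q * q) := (Commute.refl q).isNilpotent_mul_right hq
    have cq : Commute (e * q) q := hce.mul_left (Commute.refl q)
    have cqq : Commute (e * q) (q * q) := cq.mul_right cq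
    have s1 : IsNilpotent (e * q + e * q) := (Commute.refl _).isNilpotent_add n1 n1
    have s2 : IsNilpotent (e * q + e * q + q * q) :=
      (cqq.add_left cqq).isNilpotent_add s1 n2
    exact ((cq.add_left cq).add_left ((Commute.refl q).mul_left (Commute.refl q))).isNilpotent_sub s2 hq
  rw [haa] at hnil
  -- but E00 + E11 is a nonzero idempotent
  have hidem : IsIdempotentElem (E00 + E11) := by
    show (E00 + E11) * (E00 + E11) = E00 + E11
    simp only [E00, E11, mul_add, add_mul, Matrix.single_mul_single_same,
      Matrix.single_mul_single_of_ne, h01, h10, ne_eq, not_false_eq_true, one_mul]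
    abel
  have hne : (E00 + E11 : Matrix (Fin n) (Fin n) R) ≠ 0 := by
    intro h0
    have h2 : ((E00 + E11 : Matrix (Fin n) (Fin n) R) i0 i0) = (1 : R) := by
      simp [E00, E11, Matrix.add_apply, Matrix.single, h10]
    rw [h0, Matrix.zero_apply] at h2
    exact one_ne_zero h2.symm
  obtain ⟨m, hm⟩ := hnil
  rcases m with _ | m
  · rw [pow_zero] at hm
    exact hne (by rw [← one_mul (E00 + E11), hm, zero_mul])
  · rw [hidem.pow_succ_eq] at hm
    exact hne hm
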